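/- Let ξ > 0 be such that D_ξ := DᵀD − ξ²I is invertible, and let ω ∈ ℝ be such that A(iω) is invertible. Then the determinant identity det H_ξ(iω) · det D_ξ = det(G(iω)* G(iω) − ξ² I) · det A(iω) · det(−A(iω)*) holds. -/

import Mathlib

open Matrix Complex

noncomputable section

variable {n nu ny m : ℕ}

/-- `D_ξ = Dᵀ D − ξ² I`. -/
def Dxi (D : Matrix (Fin ny) (Fin nu) ℝ) (ξ : ℝ) : Matrix (Fin nu) (Fin nu) ℝ :=
  Dᵀ * D - ξ ^ 2 • (1 : Matrix (Fin nu) (Fin nu) ℝ)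

/-- `(Dᵀ)_ξ = D Dᵀ − ξ² I`, the matrix denoted `D_ξ^{-T}`-inverse base in the paper
(the only dimensionally consistent reading of the `(2,1)` block of `M₀`).
Note that it is invertible iff `D_ξ` is (for `ξ ≠ 0`), since `DᵀD` and `DDᵀ` have the
same nonzero eigenvalues. -/
def DxiT (D : Matrix (Fin ny) (Fin nu) ℝ) (ξ : ℝ) : Matrix (Fin ny) (Fin ny) ℝ :=
  D * Dᵀ - ξ ^ 2 • (1 : Matrix (Fin ny) (Fin ny) ℝ)

/-- The block matrix `M₀`. -/
def Mzero (A0 : Matrix (Fin n) (Fin n) ℝ) (B : Matrix (Fin n) (Fin nu) ℝ)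
    (C : Matrix (Fin ny) (Fin n) ℝ) (D : Matrix (Fin ny) (Fin nu) ℝ) (ξ : ℝ) :
    Matrix (Fin n ⊕ Fin n) (Fin n ⊕ Fin n) ℝ :=
  fromBlocks (A0 - B * (Dxi D ξ)⁻¹ * Dᵀ * C) (-(B * (Dxi D ξ)⁻¹ * Bᵀ))
    (ξ ^ 2 • (Cᵀ * (DxiT D ξ)⁻¹ * C)) (-A0ᵀ + Cᵀ * D * (Dxi D ξ)⁻¹ * Bᵀ)

/-- The block matrix `Mᵢ` for `1 ≤ i ≤ m`. -/
def Mpos (Ai : Matrix (Fin n) (Fin n) ℝ) : Matrix (Fin n ⊕ Fin n) (Fin n ⊕ Fin n) ℝ :=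
  fromBlocks Ai 0 0 0

/-- The block matrix `M₋ᵢ` for `1 ≤ i ≤ m`. -/
def Mneg (Ai : Matrix (Fin n) (Fin n) ℝ) : Matrix (Fin n ⊕ Fin n) (Fin n ⊕ Fin n) ℝ :=
  fromBlocks 0 0 0 (-Aiᵀ)

/-- `H_ξ(λ) = λI − M₀ − Σᵢ (Mᵢ e^{−λτᵢ} + M₋ᵢ e^{λτᵢ})`. -/
def Hxi (A0 : Matrix (Fin n) (Fin n) ℝ) (A : Fin m → Matrix (Fin n) (Fin n) ℝ)
    (B : Matrix (Fin n) (Fin nu) ℝ) (C : Matrix (Fin ny) (Fin n) ℝ)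
    (D : Matrix (Fin ny) (Fin nu) ℝ) (τ : Fin m → ℝ) (ξ : ℝ) (lam : ℂ) :
    Matrix (Fin n ⊕ Fin n) (Fin n ⊕ Fin n) ℂ :=
  lam • (1 : Matrix (Fin n ⊕ Fin n) (Fin n ⊕ Fin n) ℂ)
    - (Mzero A0 B C D ξ).map Complex.ofReal
    - ∑ i : Fin m, (Complex.exp (-lam * (τ i : ℂ)) • (Mpos (A i)).map Complex.ofReal
        + Complex.exp (lam * (τ i : ℂ)) • (Mneg (A i)).map Complex.ofReal)

/-- `A(λ) = λI − A₀ − Σᵢ Aᵢ e^{−λτᵢ}`. -/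
def Amat (A0 : Matrix (Fin n) (Fin n) ℝ) (A : Fin m → Matrix (Fin n) (Fin n) ℝ)
    (τ : Fin m → ℝ) (lam : ℂ) : Matrix (Fin n) (Fin n) ℂ :=
  lam • (1 : Matrix (Fin n) (Fin n) ℂ) - A0.map Complex.ofReal
    - ∑ i : Fin m, Complex.exp (-lam * (τ i : ℂ)) • (A i).map Complex.ofReal

/-- The transfer function `G(λ) = C A(λ)⁻¹ B + D`. -/
def Gmat (A0 : Matrix (Fin n) (Fin n) ℝ) (A : Fin m → Matrix (Fin n) (Fin n) ℝ)
    (B : Matrix (Fin n) (Fin nu) ℝ) (C : Matrix (Fin ny) (Fin n) ℝ)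
    (D : Matrix (Fin ny) (Fin nu) ℝ) (τ : Fin m → ℝ) (lam : ℂ) :
    Matrix (Fin ny) (Fin nu) ℂ :=
  C.map Complex.ofReal * (Amat A0 A τ lam)⁻¹ * B.map Complex.ofReal + D.map Complex.ofReal

/-- `τ_max`, the maximum of the delays. -/
def tauMax [NeZero m] (τ : Fin m → ℝ) : ℝ :=
  Finset.univ.sup' Finset.univ_nonempty τ

/-- `λ` is an eigenvalue of the infinite-dimensional operator `L_ξ`: there is a continuously
differentiable, not identically zero function `u : [−τ_max, τ_max] → ℂ^{2n}` with
`u′(t) = λ u(t)` on the interval and `u′(0) = M₀ u(0) + Σᵢ (Mᵢ u(−τᵢ) + M₋ᵢ u(τᵢ))`. -/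
def IsEigLxi [NeZero m] (A0 : Matrix (Fin n) (Fin n) ℝ) (A : Fin m → Matrix (Fin n) (Fin n) ℝ)
    (B : Matrix (Fin n) (Fin nu) ℝ) (C : Matrix (Fin ny) (Fin n) ℝ)
    (D : Matrix (Fin ny) (Fin nu) ℝ) (τ : Fin m → ℝ) (ξ : ℝ) (lam : ℂ) : Prop :=
  ∃ u : ℝ → (Fin n ⊕ Fin n → ℂ),
    (∀ t ∈ Set.Icc (-(tauMax τ)) (tauMax τ),
      HasDerivWithinAt u (lam • u t) (Set.Icc (-(tauMax τ)) (tauMax τ)) t) ∧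
    (∃ t ∈ Set.Icc (-(tauMax τ)) (tauMax τ), u t ≠ 0) ∧
    lam • u 0 = (Mzero A0 B C D ξ).map Complex.ofReal *ᵥ u 0
      + ∑ i : Fin m, ((Mpos (A i)).map Complex.ofReal *ᵥ u (-(τ i))
          + (Mneg (A i)).map Complex.ofReal *ᵥ u (τ i))



section Aux

open Complex

private lemma cm_mul {a b c : Type*} [Fintype b] (M : Matrix a b ℝ) (N : Matrix b c ℝ) :
    (M * N).map Complex.ofReal = M.map Complex.ofReal * N.map Complex.ofReal :=
  Matrix.map_mul (f := Complex.ofRealHom)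

private lemma cm_one {a : Type*} [Fintype a] [DecidableEq a] :
    (1 : Matrix a a ℝ).map Complex.ofReal = 1 :=
  Matrix.map_one _ Complex.ofReal_zero Complex.ofReal_one

private lemma cm_conjTranspose {a b : Type*} (M : Matrix a b ℝ) :
    (M.map Complex.ofReal)ᴴ = Mᵀ.map Complex.ofReal := by
  ext i j
  simp [Matrix.conjTranspose_apply, Complex.conj_ofReal]

private lemma cm_smul {a b : Type*} (r : ℝ) (M : Matrix a b ℝ) :
    (r • M).map Complex.ofReal = (r : ℂ) • M.map Complex.ofReal := by
  ext i j
  simp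

private lemma cm_sub {a b : Type*} (M N : Matrix a b ℝ) :
    (M - N).map Complex.ofReal = M.map Complex.ofReal - N.map Complex.ofReal := by
  ext i j
  simp

/-- The key real identity `ξ² (DDᵀ − ξ²)⁻¹ = D (DᵀD − ξ²)⁻¹ Dᵀ − 1`. -/
private lemma key_DxiT {nu ny : ℕ} (D : Matrix (Fin ny) (Fin nu) ℝ) {ξ : ℝ} (hξ : ξ ≠ 0)
    (hD : IsUnit (Dxi D ξ)) :
    (ξ ^ 2) • (DxiT D ξ)⁻¹ = D * (Dxi D ξ)⁻¹ * Dᵀ - 1 := by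
  have hdet : IsUnit (Dxi D ξ).det := (Matrix.isUnit_iff_isUnit_det _).mp hD
  have hswap : DxiT D ξ * D = D * Dxi D ξ := by
    simp only [Dxi, DxiT, Matrix.sub_mul, Matrix.mul_sub, Matrix.smul_mul, Matrix.mul_smul,
      Matrix.one_mul, Matrix.mul_one, Matrix.mul_assoc]
  have hmain : DxiT D ξ * (D * (Dxi D ξ)⁻¹ * Dᵀ) = D * Dᵀ := by
    calc DxiT D ξ * (D * (Dxi D ξ)⁻¹ * Dᵀ)
        = (DxiT D ξ * D) * (Dxi D ξ)⁻¹ * Dᵀ := by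
          simp only [Matrix.mul_assoc]
      _ = D * (Dxi D ξ * ((Dxi D ξ)⁻¹ * Dᵀ)) := by rw [hswap]; simp only [Matrix.mul_assoc]
      _ = D * Dᵀ := by rw [← Matrix.mul_assoc (Dxi D ξ), Matrix.mul_nonsing_inv _ hdet,
            Matrix.one_mul]
  have hne : (ξ ^ 2) ≠ 0 := pow_ne_zero 2 hξ
  have hright : DxiT D ξ * ((ξ ^ 2)⁻¹ • (D * (Dxi D ξ)⁻¹ * Dᵀ - 1)) = 1 := by
    rw [Matrix.mul_smul, Matrix.mul_sub, hmain, Matrix.mul_one]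
    have : D * Dᵀ - DxiT D ξ = (ξ ^ 2) • 1 := by
      simp [DxiT]
    rw [this, smul_smul, inv_mul_cancel₀ hne, one_smul]
  rw [Matrix.inv_eq_right_inv hright, smul_smul, mul_inv_cancel₀ hne, one_smul]

private lemma Hxi_blocks {n nu ny m : ℕ} (A0 : Matrix (Fin n) (Fin n) ℝ)
    (A : Fin m → Matrix (Fin n) (Fin n) ℝ) (B : Matrix (Fin n) (Fin nu) ℝ)
    (C : Matrix (Fin ny) (Fin n) ℝ) (D : Matrix (Fin ny) (Fin nu) ℝ)
    (τ : Fin m → ℝ) (ξ : ℝ) (lam : ℂ) :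
    Hxi A0 A B C D τ ξ lam = fromBlocks
      (Amat A0 A τ lam + (B * (Dxi D ξ)⁻¹ * (Dᵀ * C)).map Complex.ofReal)
      ((B * (Dxi D ξ)⁻¹ * Bᵀ).map Complex.ofReal)
      (-(((ξ : ℂ)) ^ 2 • (Cᵀ * (DxiT D ξ)⁻¹ * C).map Complex.ofReal))
      ((lam • 1 + A0ᵀ.map Complex.ofReal
          + ∑ i : Fin m, Complex.exp (lam * (τ i : ℂ)) • (A i)ᵀ.map Complex.ofReal)
        - (Cᵀ * D * (Dxi D ξ)⁻¹ * Bᵀ).map Complex.ofReal) := by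
  ext (i | i) (j | j) <;>
    simp [Hxi, Mzero, Mpos, Mneg, Amat, Matrix.sub_apply, Matrix.add_apply, Matrix.neg_apply,
      Matrix.smul_apply, Matrix.one_apply, Matrix.sum_apply, Matrix.mul_assoc, smul_eq_mul,
      Finset.sum_sub_distrib, Finset.mul_sum] <;>
    push_cast <;> ring

private lemma neg_conjTranspose_Amat {n m : ℕ} (A0 : Matrix (Fin n) (Fin n) ℝ)
    (A : Fin m → Matrix (Fin n) (Fin n) ℝ) (τ : Fin m → ℝ) (ω : ℝ) :
    -(Amat A0 A τ (Complex.I * ω))ᴴ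
      = (Complex.I * ω) • 1 + A0ᵀ.map Complex.ofReal
          + ∑ i : Fin m, Complex.exp ((Complex.I * ω) * (τ i : ℂ)) • (A i)ᵀ.map Complex.ofReal := by
  have h1 : ∀ i : Fin m,
      (Complex.exp (-(Complex.I * ω) * (τ i : ℂ)) • (A i).map Complex.ofReal)ᴴ
        = Complex.exp ((Complex.I * ω) * (τ i : ℂ)) • (A i)ᵀ.map Complex.ofReal := by
    intro i
    rw [Matrix.conjTranspose_smul, cm_conjTranspose]
    congr 1
    rw [Complex.star_def, ← Complex.exp_conj]
    congr 1
    simp [Complex.conj_ofReal]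
  have h2 : star (Complex.I * (ω : ℂ)) = -(Complex.I * ω) := by
    simp [Complex.star_def, Complex.conj_ofReal]
  rw [Amat, Matrix.conjTranspose_sub, Matrix.conjTranspose_sub, Matrix.conjTranspose_smul,
    Matrix.conjTranspose_one, cm_conjTranspose, Matrix.conjTranspose_sum]
  simp only [h1, h2, neg_smul, neg_sub]
  module

end Aux

/-- the determinant identity
`det H_ξ(iω) · det D_ξ = det(G(iω)* G(iω) − ξ² I) · det A(iω) · det(−A(iω)*)`. -/
theorem det_Hxi_mul_det_Dxi [NeZero n] [NeZero nu] [NeZero ny] [NeZero m]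
    (A0 : Matrix (Fin n) (Fin n) ℝ) (A : Fin m → Matrix (Fin n) (Fin n) ℝ)
    (B : Matrix (Fin n) (Fin nu) ℝ) (C : Matrix (Fin ny) (Fin n) ℝ)
    (D : Matrix (Fin ny) (Fin nu) ℝ) (τ : Fin m → ℝ)
    (ξ : ℝ) (hξ : 0 < ξ) (hD : IsUnit (Dxi D ξ))
    (ω : ℝ) (hA : IsUnit (Amat A0 A τ (Complex.I * ω))) :
    (Hxi A0 A B C D τ ξ (Complex.I * ω)).det * ((Dxi D ξ).det : ℂ)
      = ((Gmat A0 A B C D τ (Complex.I * ω))ᴴ * Gmat A0 A B C D τ (Complex.I * ω)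
            - ((ξ : ℂ) ^ 2) • 1).det
          * (Amat A0 A τ (Complex.I * ω)).det * (-(Amat A0 A τ (Complex.I * ω))ᴴ).det := by
  have hξ' : ξ ≠ 0 := ne_of_gt hξ
  have hdetD : IsUnit (Dxi D ξ).det := (Matrix.isUnit_iff_isUnit_det _).mp hD
  set lam : ℂ := Complex.I * ↑ω with hlam
  set Ac : Matrix (Fin n) (Fin n) ℂ := Amat A0 A τ lam with hAcdef
  have hdetA : IsUnit Ac.det := (Matrix.isUnit_iff_isUnit_det _).mp hA
  have hdetAH : IsUnit (Acᴴ).det := by rw [Matrix.det_conjTranspose]; exact hdetA.star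
  have hAAinv : Ac * Ac⁻¹ = 1 := Matrix.mul_nonsing_inv _ hdetA
  have hAHinv : Acᴴ * Acᴴ⁻¹ = 1 := Matrix.mul_nonsing_inv _ hdetAH
  set Ec : Matrix (Fin nu) (Fin nu) ℂ := ((Dxi D ξ)⁻¹).map Complex.ofReal with hEcdef
  set Dxic : Matrix (Fin nu) (Fin nu) ℂ := (Dxi D ξ).map Complex.ofReal with hDxicdef
  have hDE : Dxic * Ec = 1 := by
    rw [hDxicdef, hEcdef, ← cm_mul, Matrix.mul_nonsing_inv _ hdetD, cm_one]
  set K := fromBlocks Ac 0 ((Cᵀ * C).map Complex.ofReal) (-Acᴴ) with hKdef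
  set U := fromRows (B.map Complex.ofReal) (-((Cᵀ * D).map Complex.ofReal)) with hUdef
  set V := fromCols ((Dᵀ * C).map Complex.ofReal) (Bᵀ.map Complex.ofReal) with hVdef
  set Kinv := fromBlocks Ac⁻¹ 0 (Acᴴ⁻¹ * ((Cᵀ * C).map Complex.ofReal * Ac⁻¹)) (-Acᴴ⁻¹)
    with hKinvdef
  have hNA := neg_conjTranspose_Amat A0 A τ ω
  rw [← hlam, ← hAcdef] at hNA
  -- Step 1: the block decomposition `H = K + U (Ec V)`.
  have hH : Hxi A0 A B C D τ ξ lam = K + U * (Ec * V) := by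
    rw [Hxi_blocks, hUdef, hVdef, hKdef, Matrix.mul_fromCols,
      Matrix.fromRows_mul_fromCols, Matrix.fromBlocks_add, Matrix.fromBlocks_inj]
    refine ⟨?_, ?_, ?_, ?_⟩
    · rw [← hAcdef, cm_mul, cm_mul, ← hEcdef, Matrix.mul_assoc]
    · rw [cm_mul, cm_mul, ← hEcdef, Matrix.mul_assoc, zero_add]
    · have hreal : (ξ ^ 2) • (Cᵀ * (DxiT D ξ)⁻¹ * C)
          = Cᵀ * D * (Dxi D ξ)⁻¹ * (Dᵀ * C) - Cᵀ * C := by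
        rw [← Matrix.smul_mul, ← Matrix.mul_smul, key_DxiT D hξ' hD]
        simp only [Matrix.mul_sub, Matrix.sub_mul, Matrix.mul_one, Matrix.one_mul,
          Matrix.mul_assoc]
      have e1 : ((ξ : ℂ)) ^ 2 • (Cᵀ * (DxiT D ξ)⁻¹ * C).map Complex.ofReal
          = ((ξ ^ 2) • (Cᵀ * (DxiT D ξ)⁻¹ * C)).map Complex.ofReal := by
        rw [cm_smul, Complex.ofReal_pow]
      rw [e1, hreal, cm_sub, cm_mul, cm_mul, ← hEcdef]
      simp only [neg_sub, Matrix.neg_mul, Matrix.mul_assoc, sub_eq_add_neg]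
      abel
    · rw [hNA, cm_mul, cm_mul, ← hEcdef, sub_eq_add_neg, Matrix.neg_mul, Matrix.mul_assoc]
  -- Step 2: `K` is invertible with explicit inverse `Kinv`.
  have hKKinv : K * Kinv = 1 := by
    rw [hKdef, hKinvdef, Matrix.fromBlocks_multiply, ← Matrix.fromBlocks_one,
      Matrix.fromBlocks_inj]
    refine ⟨?_, ?_, ?_, ?_⟩
    · rw [hAAinv, Matrix.zero_mul, add_zero]
    · rw [Matrix.mul_zero, Matrix.zero_mul, add_zero]
    · rw [Matrix.neg_mul, ← Matrix.mul_assoc, hAHinv, Matrix.one_mul, add_neg_cancel]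
    · rw [Matrix.mul_zero, Matrix.neg_mul, Matrix.mul_neg, neg_neg, hAHinv, zero_add]
  -- Step 3: Weinstein–Aronszajn.
  have hdetH : (Hxi A0 A B C D τ ξ lam).det
      = K.det * (1 + (Ec * V) * (Kinv * U)).det := by
    have hfact : Hxi A0 A B C D τ ξ lam = K * (1 + (Kinv * U) * (Ec * V)) := by
      rw [Matrix.mul_add, Matrix.mul_one, hH]
      congr 1
      simp only [← Matrix.mul_assoc, hKKinv, Matrix.one_mul]
    rw [hfact, Matrix.det_mul, Matrix.det_one_add_mul_comm]
  have hDxicdet : ((Dxi D ξ).det : ℂ) = Dxic.det := by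
    rw [hDxicdef]; exact RingHom.map_det Complex.ofRealHom _
  -- Step 4: absorb `Dxic` into the small determinant.
  have hstep : Dxic.det * (1 + (Ec * V) * (Kinv * U)).det = (Dxic + V * (Kinv * U)).det := by
    have h1 : Dxic * ((Ec * V) * (Kinv * U)) = V * (Kinv * U) := by
      simp only [← Matrix.mul_assoc]
      rw [hDE, Matrix.one_mul]
    rw [← Matrix.det_mul, Matrix.mul_add, Matrix.mul_one, h1]
  -- Step 5: the Schur complement is `GᴴG − ξ²`.
  have hGm : Gmat A0 A B C D τ lam
      = C.map Complex.ofReal * Ac⁻¹ * B.map Complex.ofReal + D.map Complex.ofReal := by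
    rw [Gmat, ← hAcdef]
  have hGH : (Gmat A0 A B C D τ lam)ᴴ
      = Bᵀ.map Complex.ofReal * (Acᴴ⁻¹ * Cᵀ.map Complex.ofReal) + Dᵀ.map Complex.ofReal := by
    rw [hGm, Matrix.conjTranspose_add, Matrix.conjTranspose_mul, Matrix.conjTranspose_mul,
      Matrix.conjTranspose_nonsing_inv, cm_conjTranspose, cm_conjTranspose, cm_conjTranspose]
  have hfinal : Dxic + V * (Kinv * U)
      = (Gmat A0 A B C D τ lam)ᴴ * Gmat A0 A B C D τ lam - (ξ : ℂ) ^ 2 • 1 := by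
    rw [hGH, hGm, hVdef, hKinvdef, hUdef, Matrix.fromBlocks_mul_fromRows,
      Matrix.fromCols_mul_fromRows, hDxicdef, Dxi, cm_sub, cm_mul, cm_smul, cm_one,
      Complex.ofReal_pow]
    simp only [cm_mul, Matrix.zero_mul, Matrix.mul_zero, add_zero, Matrix.mul_neg,
      Matrix.neg_mul, neg_neg, Matrix.mul_add, Matrix.add_mul, Matrix.mul_assoc, sub_eq_add_neg]
    abel
  -- Step 6: assemble.
  have hdetK : K.det = Ac.det * (-Acᴴ).det := by
    rw [hKdef]; exact Matrix.det_fromBlocks_zero₁₂ _ _ _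
  rw [hdetH, hDxicdet, mul_assoc, mul_comm _ Dxic.det, hstep, hfinal, hdetK]
  ring
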